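/- Let μ be a σ-finite measure on a measurable space (E,𝓔) and let κ : E → E be a μ-reversible transform with κ∘κ = id. If ψ₁ and ψ₂ are (μ,κ)-reversible transforms, then the composition ψ₁∘ψ₂∘ψ₁ is a (μ,κ)-reversible transform. -/

import Mathlib

open MeasureTheory

/-- A transform `Φ` is `μ`-reversible if `μ(A ∩ Φ⁻¹(B)) = μ(B ∩ Φ⁻¹(A))` for all
measurable `A`, `B`. -/
def MeasRev {E : Type*} [MeasurableSpace E] (μ : Measure E) (Φ : E → E) : Prop :=
  ∀ A B : Set E, MeasurableSet A → MeasurableSet B → μ (A ∩ Φ ⁻¹' B) = μ (B ∩ Φ ⁻¹' A)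

/-- A transform `Φ` is `(μ,κ)`-reversible if `κ ∘ Φ` is `μ`-reversible. -/
def FlipRev {E : Type*} [MeasurableSpace E] (μ : Measure E) (κ Φ : E → E) : Prop :=
  MeasRev μ (κ ∘ Φ)

/-- Reversibility at the level of Lebesgue integrals. -/
def LRev {E : Type*} [MeasurableSpace E] (μ : Measure E) (Φ : E → E) : Prop :=
  ∀ f g : E → ENNReal, Measurable f → Measurable g →
    ∫⁻ x, f x * g (Φ x) ∂μ = ∫⁻ x, g x * f (Φ x) ∂μ

lemma measRev_to_LRev {E : Type*} [MeasurableSpace E] (μ : Measure E) [SigmaFinite μ]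
    {Φ : E → E} (hΦ : Measurable Φ) (h : MeasRev μ Φ) : LRev μ Φ := by
  have hmap : Measure.map (fun x => (x, Φ x)) μ = Measure.map (fun x => (Φ x, x)) μ := by
    refine Measure.ext_of_generateFrom_of_iUnion
      (Set.image2 (· ×ˢ ·) { s : Set E | MeasurableSet s } { t : Set E | MeasurableSet t })
      (fun n => spanningSets μ n ×ˢ spanningSets μ n) generateFrom_prod.symm isPiSystem_prod
      ?_ ?_ ?_ ?_
    · rw [Set.iUnion_prod_of_monotone (monotone_spanningSets μ) (monotone_spanningSets μ),
        iUnion_spanningSets, Set.univ_prod_univ]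
    · exact fun n => Set.mem_image2_of_mem (measurableSet_spanningSets μ n)
        (measurableSet_spanningSets μ n)
    · intro n
      rw [Measure.map_apply (show Measurable fun x : E => (x, Φ x) from measurable_id.prodMk hΦ)
        ((measurableSet_spanningSets μ n).prod (measurableSet_spanningSets μ n))]
      · refine ne_of_lt (lt_of_le_of_lt (measure_mono ?_) (measure_spanningSets_lt_top μ n))
        intro x hx
        exact hx.1
    · rintro _ ⟨A, hA, B, hB, rfl⟩
      rw [show (fun x1 x2 : Set E => x1 ×ˢ x2) A B = A ×ˢ B from rfl,
        Measure.map_apply (show Measurable fun x : E => (x, Φ x) from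
          measurable_id.prodMk hΦ) (hA.prod hB),
        Measure.map_apply (show Measurable fun x : E => (Φ x, x) from
          hΦ.prodMk measurable_id) (hA.prod hB)]
      have h1 : (fun x => (x, Φ x)) ⁻¹' (A ×ˢ B) = A ∩ Φ ⁻¹' B := rfl
      have h2 : (fun x => (Φ x, x)) ⁻¹' (A ×ˢ B) = B ∩ Φ ⁻¹' A := by
        ext x; exact ⟨fun hx => ⟨hx.2, hx.1⟩, fun hx => ⟨hx.2, hx.1⟩⟩
      rw [h1, h2, h A B hA hB]
  intro f g hf hg
  have l1 := lintegral_map (μ := μ) (g := fun x => (x, Φ x))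
    (f := fun p : E × E => f p.1 * g p.2)
    ((hf.comp measurable_fst).mul (hg.comp measurable_snd)) (measurable_id.prodMk hΦ)
  have l2 := lintegral_map (μ := μ) (g := fun x => (Φ x, x))
    (f := fun p : E × E => f p.1 * g p.2)
    ((hf.comp measurable_fst).mul (hg.comp measurable_snd)) (hΦ.prodMk measurable_id)
  calc ∫⁻ x, f x * g (Φ x) ∂μ
      = ∫⁻ p : E × E, f p.1 * g p.2 ∂(Measure.map (fun x => (x, Φ x)) μ) := l1.symm
    _ = ∫⁻ p : E × E, f p.1 * g p.2 ∂(Measure.map (fun x => (Φ x, x)) μ) := by rw [hmap]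
    _ = ∫⁻ x, f (Φ x) * g x ∂μ := l2
    _ = ∫⁻ x, g x * f (Φ x) ∂μ := lintegral_congr fun x => mul_comm _ _

lemma lRev_to_measRev {E : Type*} [MeasurableSpace E] (μ : Measure E)
    {Φ : E → E} (hΦ : Measurable Φ) (h : LRev μ Φ) : MeasRev μ Φ := by
  intro A B hA hB
  have key : ∀ (A B : Set E), MeasurableSet A → MeasurableSet B →
      μ (A ∩ Φ ⁻¹' B) = ∫⁻ x, A.indicator 1 x * B.indicator 1 (Φ x) ∂μ := by
    intro A B hA hB
    have heq : ∀ x, A.indicator (1 : E → ENNReal) x * B.indicator 1 (Φ x)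
        = (A ∩ Φ ⁻¹' B).indicator 1 x := by
      intro x
      by_cases hx : x ∈ A <;> by_cases hy : Φ x ∈ B <;>
        simp [Set.indicator_apply, hx, hy, Set.mem_inter_iff]
    simp_rw [heq]
    rw [lintegral_indicator (hA.inter (hB.preimage hΦ))]
    simp
  rw [key A B hA hB, key B A hB hA,
    h (A.indicator 1) (B.indicator 1) (measurable_one.indicator hA)
      (measurable_one.indicator hB)]

/-- Palindrome composition of two `LRev` transforms is `LRev`. -/
lemma lRev_palindrome {E : Type*} [MeasurableSpace E] (μ : Measure E)
    {S R : E → E} (hS : Measurable S) (hR : Measurable R)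
    (h1 : LRev μ S) (h2 : LRev μ R) : LRev μ (fun x => S (R (S x))) := by
  intro f g hf hg
  calc ∫⁻ x, f x * g (S (R (S x))) ∂μ
      = ∫⁻ x, (fun y => g (S (R y))) x * f (S x) ∂μ :=
        h1 f (fun y => g (S (R y))) hf ((hg.comp hS).comp hR)
    _ = ∫⁻ x, (f ∘ S) x * (g ∘ S) (R x) ∂μ := lintegral_congr fun x => mul_comm _ _
    _ = ∫⁻ x, (g ∘ S) x * (f ∘ S) (R x) ∂μ := h2 (f ∘ S) (g ∘ S) (hf.comp hS) (hg.comp hS)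
    _ = ∫⁻ x, (fun y => f (S (R y))) x * g (S x) ∂μ := lintegral_congr fun x => mul_comm _ _
    _ = ∫⁻ x, g x * f (S (R (S x))) ∂μ :=
        (h1 g (fun y => f (S (R y))) hg ((hf.comp hS).comp hR)).symm

/-- If `ψ₁, ψ₂` are `(μ,κ)`-reversible transforms, then so is `ψ₁ ∘ ψ₂ ∘ ψ₁`. -/
theorem stmt_4 {E : Type*} [MeasurableSpace E] (μ : Measure E) [SigmaFinite μ]
    (κ : E → E) (hκ_meas : Measurable κ) (hκ_bij : Function.Bijective κ)
    (hκκ : κ ∘ κ = id) (hκ_rev : MeasRev μ κ)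
    (ψ₁ ψ₂ : E → E) (hψ₁_meas : Measurable ψ₁) (hψ₂_meas : Measurable ψ₂)
    (hψ₁_bij : Function.Bijective ψ₁) (hψ₂_bij : Function.Bijective ψ₂)
    (hψ₁ : FlipRev μ κ ψ₁) (hψ₂ : FlipRev μ κ ψ₂) :
    FlipRev μ κ (ψ₁ ∘ ψ₂ ∘ ψ₁) := by
  have hκκ' : ∀ x, κ (κ x) = x := fun x => congrFun hκκ x
  set α := κ ∘ ψ₁ with hα
  set β := κ ∘ ψ₂ with hβ
  have hα_meas : Measurable α := hκ_meas.comp hψ₁_meas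
  have hβ_meas : Measurable β := hκ_meas.comp hψ₂_meas
  have hLα : LRev μ α := measRev_to_LRev μ hα_meas hψ₁
  have hLβ : LRev μ β := measRev_to_LRev μ hβ_meas hψ₂
  have hLκ : LRev μ κ := measRev_to_LRev μ hκ_meas hκ_rev
  have hmid : LRev μ (fun x => κ (β (κ x))) := lRev_palindrome μ hκ_meas hβ_meas hLκ hLβ
  have hfull : LRev μ (fun x => α (κ (β (κ (α x))))) :=
    lRev_palindrome μ hα_meas (hκ_meas.comp (hβ_meas.comp hκ_meas)) hLα hmid
  have heq : (fun x => α (κ (β (κ (α x))))) = κ ∘ (ψ₁ ∘ ψ₂ ∘ ψ₁) := by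
    funext x
    simp only [hα, hβ, Function.comp_apply, hκκ']
  rw [FlipRev, ← heq]
  exact lRev_to_measRev μ (hα_meas.comp ((hκ_meas.comp (hβ_meas.comp hκ_meas)).comp hα_meas)) hfull
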